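/- Let 𝔪 be a multisegment and let Δ < Δ' be a pair of consecutive segments in 𝔪. Let 𝔪' be the submultisegment of 𝔪 − Δ − Δ' consisting of all segments Δ̃ with a(Δ') ≤ a(Δ̃) or b(Δ') ≤ b(Δ̃). Write the segments of 𝔪 − 𝔪' − Δ − Δ' in an ascending order Δ₁,...,Δ_r and the segments of 𝔪' in an ascending order Δ₁',...,Δ_s'. Then the concatenated sequence Δ₁, ..., Δ_r, Δ, Δ', Δ₁', ..., Δ_s' is in ascending order. -/
import Mathlib


/-- Two segments `[a,b]`, `[a',b']` are linked if `a < a' ≤ b+1 ≤ b'` or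
`a' < a ≤ b'+1 ≤ b`. -/
def Linked (s t : ℤ × ℤ) : Prop :=
  (s.1 < t.1 ∧ t.1 ≤ s.2 + 1 ∧ s.2 + 1 ≤ t.2) ∨
  (t.1 < s.1 ∧ s.1 ≤ t.2 + 1 ∧ t.2 + 1 ≤ s.2)

/-- `s < t` for linked segments: `a < a' ≤ b+1 ≤ b'`. -/
def SegLT (s t : ℤ × ℤ) : Prop := s.1 < t.1 ∧ t.1 ≤ s.2 + 1 ∧ s.2 + 1 ≤ t.2

/-- The multiset `{[x,y]}` if `x ≤ y`, empty otherwise. -/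
def seg? (x y : ℤ) : Multiset (ℤ × ℤ) := if x ≤ y then {(x, y)} else 0

/-- `IUStep m n`: `n` is obtained from `m` by one elementary intersection-union
process on a linked pair `Δ < Δ'` of `m` (dropping the intersection if empty). -/
def IUStep (m n : Multiset (ℤ × ℤ)) : Prop :=
  ∃ Δ Δ' : ℤ × ℤ, Δ ∈ m ∧ Δ' ∈ m.erase Δ ∧ SegLT Δ Δ' ∧
    n = ((m.erase Δ).erase Δ') + {(Δ.1, Δ'.2)} + seg? Δ'.1 Δ.2

/-- `n ≤_Z m`: `n` is obtained from `m` by a (possibly empty) sequence of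
elementary intersection-union processes. -/
def leZ (n m : Multiset (ℤ × ℤ)) : Prop := Relation.ReflTransGen IUStep m n

/-- `Δ < Δ'` is a pair of consecutive segments in `m`: they are linked with
`a(Δ) < a(Δ')` and no other segment `Δ''` of `m` satisfies
`a(Δ) ≤ a(Δ'') ≤ a(Δ')`, `b(Δ) ≤ b(Δ'') ≤ b(Δ')` and is linked to `Δ` or `Δ'`. -/
def Consecutive (m : Multiset (ℤ × ℤ)) (Δ Δ' : ℤ × ℤ) : Prop :=
  Δ ∈ m ∧ Δ' ∈ m.erase Δ ∧ SegLT Δ Δ' ∧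
  ∀ Δ'' ∈ (m.erase Δ).erase Δ',
    ¬(Δ.1 ≤ Δ''.1 ∧ Δ''.1 ≤ Δ'.1 ∧ Δ.2 ≤ Δ''.2 ∧ Δ''.2 ≤ Δ'.2 ∧
      (Linked Δ'' Δ ∨ Linked Δ'' Δ'))

/-- A sequence of segments is in ascending order if for any `i ≤ j`, the `i`-th and
`j`-th segments are either unlinked or the `i`-th has strictly smaller left endpoint. -/
def Ascending (l : List (ℤ × ℤ)) : Prop :=
  ∀ i j : ℕ, i ≤ j → j < l.length →
    ¬ Linked l[i]! l[j]! ∨ (l[i]!).1 < (l[j]!).1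

lemma ascending_append (l r : List (ℤ × ℤ)) (h1 : Ascending l) (h2 : Ascending r)
    (h : ∀ s ∈ l, ∀ t ∈ r, ¬ Linked s t ∨ s.1 < t.1) :
    Ascending (l ++ r) := by
  intro i j hij hj
  rw [List.length_append] at hj
  by_cases hjl : j < l.length
  · have hil : i < l.length := lt_of_le_of_lt hij hjl
    rw [getElem!_pos (l ++ r) i (by simp; omega), getElem!_pos (l ++ r) j (by simp; omega),
      List.getElem_append_left hil, List.getElem_append_left hjl]
    have := h1 i j hij hjl
    rwa [getElem!_pos l i hil, getElem!_pos l j hjl] at this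
  · push_neg at hjl
    have hjr : j - l.length < r.length := by omega
    rw [getElem!_pos (l ++ r) j (by simp; omega), List.getElem_append_right hjl]
    by_cases hil : i < l.length
    · rw [getElem!_pos (l ++ r) i (by simp; omega), List.getElem_append_left hil]
      exact h _ (List.getElem_mem _) _ (List.getElem_mem _)
    · push_neg at hil
      rw [getElem!_pos (l ++ r) i (by simp; omega), List.getElem_append_right hil]
      have := h2 (i - l.length) (j - l.length) (by omega) hjr
      rwa [getElem!_pos r _ (by omega), getElem!_pos r _ hjr] at this

/-- Let `Δ < Δ'` be a consecutive pair in `𝔪`, let `𝔪'` consist of the segments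
`Δ̃` of `𝔪 − Δ − Δ'` with `a(Δ') ≤ a(Δ̃)` or `b(Δ') ≤ b(Δ̃)`, and write
`𝔪 − 𝔪' − Δ − Δ'` in an ascending order `Δ₁,...,Δ_r` and `𝔪'` in an ascending
order `Δ₁',...,Δ_s'`. Then `Δ₁, ..., Δ_r, Δ, Δ', Δ₁', ..., Δ_s'` is ascending. -/
theorem consecutive_concat_ascending (m : Multiset (ℤ × ℤ)) (Δ Δ' : ℤ × ℤ)
    (hsegs : ∀ s ∈ m, s.1 ≤ s.2)
    (hcons : Consecutive m Δ Δ')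
    (l1 l2 : List (ℤ × ℤ))
    (hl2 : (l2 : Multiset (ℤ × ℤ)) =
      ((m.erase Δ).erase Δ').filter (fun s => Δ'.1 ≤ s.1 ∨ Δ'.2 ≤ s.2))
    (hl1 : (l1 : Multiset (ℤ × ℤ)) =
      ((m.erase Δ).erase Δ') -
        ((m.erase Δ).erase Δ').filter (fun s => Δ'.1 ≤ s.1 ∨ Δ'.2 ≤ s.2))
    (h1 : Ascending l1) (h2 : Ascending l2) :
    Ascending (l1 ++ Δ :: Δ' :: l2) := by
  obtain ⟨hΔm, hΔ'm, hlt, hno⟩ := hcons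
  obtain ⟨hlt1, hlt2, hlt3⟩ := hlt
  set M := (m.erase Δ).erase Δ' with hM
  have hfilter : M - M.filter (fun s => Δ'.1 ≤ s.1 ∨ Δ'.2 ≤ s.2) =
      M.filter (fun s => ¬(Δ'.1 ≤ s.1 ∨ Δ'.2 ≤ s.2)) :=
    tsub_eq_of_eq_add_rev (Multiset.filter_add_not _ M).symm
  have hmem1 : ∀ s ∈ l1, s ∈ M ∧ s.1 < Δ'.1 ∧ s.2 < Δ'.2 := by
    intro s hs
    have h' : s ∈ (l1 : Multiset (ℤ × ℤ)) := by exact_mod_cast hs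
    rw [hl1, hfilter, Multiset.mem_filter] at h'
    obtain ⟨hsM, hp⟩ := h'
    push_neg at hp
    exact ⟨hsM, hp.1, hp.2⟩
  have hmem2 : ∀ t ∈ l2, t ∈ M ∧ (Δ'.1 ≤ t.1 ∨ Δ'.2 ≤ t.2) := by
    intro t ht
    have h' : t ∈ (l2 : Multiset (ℤ × ℤ)) := by exact_mod_cast ht
    rw [hl2, Multiset.mem_filter] at h'
    exact h'
  have hmid : Ascending (Δ :: Δ' :: l2) := by
    have he : Δ :: Δ' :: l2 = [Δ, Δ'] ++ l2 := rfl
    rw [he]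
    refine ascending_append _ _ ?_ h2 ?_
    · intro i j hij hj
      simp only [List.length_cons, List.length_nil] at hj
      interval_cases j <;> interval_cases i <;>
        simp only [List.getElem!_cons_zero, List.getElem!_cons_succ, Linked] <;> omega
    · intro s hs t ht
      obtain ⟨htM, htp⟩ := hmem2 t ht
      simp only [List.mem_cons, List.mem_singleton, List.not_mem_nil, or_false] at hs
      rcases hs with hs | hs
      · rw [hs]
        by_contra hc
        push_neg at hc
        obtain ⟨hL, hge⟩ := hc
        rcases hL with ⟨a, b, c⟩ | ⟨a, b, c⟩ <;> rcases htp with hp | hp <;> omega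
      · rw [hs]
        by_contra hc
        push_neg at hc
        obtain ⟨hL, hge⟩ := hc
        rcases hL with ⟨a, b, c⟩ | ⟨a, b, c⟩ <;> rcases htp with hp | hp <;> omega
  apply ascending_append _ _ h1 hmid
  intro s hs t ht
  obtain ⟨hsM, hsa, hsb⟩ := hmem1 s hs
  simp only [List.mem_cons] at ht
  rcases ht with ht | ht
  · -- t = Δ
    rw [ht]
    by_contra hc
    push_neg at hc
    obtain ⟨hL, hge⟩ := hc
    have hbranch : Δ.1 < s.1 ∧ s.1 ≤ Δ.2 + 1 ∧ Δ.2 + 1 ≤ s.2 := by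
      rcases hL with ⟨a, b, c⟩ | ⟨a, b, c⟩
      · exact absurd hge (by omega)
      · exact ⟨a, b, c⟩
    refine hno s hsM ⟨by omega, by omega, by omega, by omega, Or.inl ?_⟩
    exact Or.inr hbranch
  · rcases ht with ht | ht
    · -- t = Δ'
      rw [ht]
      exact Or.inr hsa
    · obtain ⟨htM, htp⟩ := hmem2 t ht
      by_contra hc
      push_neg at hc
      obtain ⟨hL, hge⟩ := hc
      rcases hL with ⟨a, b, c⟩ | ⟨a, b, c⟩ <;> rcases htp with hp | hp <;> omega
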